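/- arXiv:1203.1807 — 3 statements merged into one kernel-verified Lean document; each statement's English description precedes it below -/
import Mathlib

section
/- Let v be a nonzero finite linear combination v = Σ b^m_n Θ^m_n with real coefficients b^m_n, the sum ranging over finitely many pairs of integers 0 ≤ m ≤ n. Then a formal power series g ∈ ℝ[[x,y,z]] satisfies v(g) = 0 if and only if g lies in the image of the (continuous) ℝ-algebra homomorphism ℝ[[u,w]] → ℝ[[x,y,z]] determined by substituting u ↦ x and w ↦ y² + z². In other words, the algebra of formal first integrals of any nonzero element of the span of the Θ^m_n is the (closed) subalgebra generated by x and y² + z². -/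
noncomputable section

/-- Formal power series in the variables x, y, z (indexed `0, 1, 2`). -/
abbrev PS := MvPowerSeries (Fin 3) ℝ

/-- The formal partial derivative of a formal power series with respect to the i-th variable. -/
def psD (i : Fin 3) (f : PS) : PS :=
  fun d => ((d i : ℝ) + 1) * f (d + Finsupp.single i 1)

/-- The derivation action `v(g) = v₁ ∂g/∂x + v₂ ∂g/∂y + v₃ ∂g/∂z` of a formal vector field. -/
def psApply (v : Fin 3 → PS) (g : PS) : PS := ∑ i, v i * psD i g

/-- The vector field `F^l_k := x^l (y²+z²)^{k−l} ((k−l+1) x ∂_x − ((l+1)/2) y ∂_y − ((l+1)/2) z ∂_z)`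
for integers `−1 ≤ l ≤ k`; for `l = −1` this is `(k+2)(y²+z²)^{k+1} ∂_x`. -/
def Fps (l k : ℤ) : Fin 3 → PS :=
  ![MvPowerSeries.C (σ := Fin 3) (R := ℝ) ((k - l + 1 : ℤ) : ℝ) * MvPowerSeries.X 0 ^ (l + 1).toNat *
      (MvPowerSeries.X 1 ^ 2 + MvPowerSeries.X 2 ^ 2) ^ (k - l).toNat,
    MvPowerSeries.C (σ := Fin 3) (R := ℝ) (-((l + 1 : ℤ) : ℝ) / 2) * MvPowerSeries.X 0 ^ l.toNat *
      MvPowerSeries.X 1 * (MvPowerSeries.X 1 ^ 2 + MvPowerSeries.X 2 ^ 2) ^ (k - l).toNat,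
    MvPowerSeries.C (σ := Fin 3) (R := ℝ) (-((l + 1 : ℤ) : ℝ) / 2) * MvPowerSeries.X 0 ^ l.toNat *
      MvPowerSeries.X 2 * (MvPowerSeries.X 1 ^ 2 + MvPowerSeries.X 2 ^ 2) ^ (k - l).toNat]

/-- The vector field `Θ^m_n := x^m (y²+z²)^{n−m} (z ∂_y − y ∂_z)` for integers `0 ≤ m ≤ n`. -/
def Tps (m n : ℤ) : Fin 3 → PS :=
  ![0,
    MvPowerSeries.X 0 ^ m.toNat * (MvPowerSeries.X 1 ^ 2 + MvPowerSeries.X 2 ^ 2) ^ (n - m).toNat *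
      MvPowerSeries.X 2,
    -(MvPowerSeries.X 0 ^ m.toNat * (MvPowerSeries.X 1 ^ 2 + MvPowerSeries.X 2 ^ 2) ^ (n - m).toNat *
      MvPowerSeries.X 1)]

/-- Substitution of a one-variable formal power series `h` into `f`; this coefficientwise
finite sum agrees with the usual composition of formal power series whenever `f` has zero
constant term. -/
def substOne (f : PS) (h : PowerSeries ℝ) : PS :=
  fun d => ∑ n ∈ Finset.range ((d.sum fun _ v => v) + 1),
    PowerSeries.coeff (R := ℝ) n h * MvPowerSeries.coeff (R := ℝ) d (f ^ n)

/-- The image of the monomial `u^{e 0} w^{e 1}` under the substitution `u ↦ x, w ↦ y²+z²`. -/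
def subMon (e : Fin 2 →₀ ℕ) : PS :=
  MvPowerSeries.X 0 ^ (e 0) * (MvPowerSeries.X 1 ^ 2 + MvPowerSeries.X 2 ^ 2) ^ (e 1)

/-- The (continuous) ℝ-algebra homomorphism `ℝ[[u,w]] → ℝ[[x,y,z]]` determined by the
substitution `u ↦ x`, `w ↦ y²+z²`, computed coefficientwise (each coefficient of the image
is a finite sum, since only exponents `e` with `e 0, e 1 ≤ deg d` can contribute). -/
def subst2 (h : MvPowerSeries (Fin 2) ℝ) : PS :=
  fun d => ∑ e ∈ Finset.Iic
      (Finsupp.single (0 : Fin 2) (d.sum fun _ v => v) +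
        Finsupp.single 1 (d.sum fun _ v => v)),
    MvPowerSeries.coeff (R := ℝ) e h * MvPowerSeries.coeff (R := ℝ) d (subMon e)

open MvPowerSeries Finsupp

def mk3 (a b c : ℕ) : Fin 3 →₀ ℕ :=
  Finsupp.single 0 a + Finsupp.single 1 b + Finsupp.single 2 c

@[simp] lemma mk3_apply0 (a b c : ℕ) : mk3 a b c 0 = a := by
  simp [mk3, Finsupp.single_apply]
@[simp] lemma mk3_apply1 (a b c : ℕ) : mk3 a b c 1 = b := by
  simp [mk3, Finsupp.single_apply]
@[simp] lemma mk3_apply2 (a b c : ℕ) : mk3 a b c 2 = c := by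
  simp [mk3, Finsupp.single_apply]

lemma mk3_surj (d : Fin 3 →₀ ℕ) : ∃ a b c, d = mk3 a b c := by
  refine ⟨d 0, d 1, d 2, ?_⟩
  ext i
  fin_cases i <;> simp

lemma mk3_inj {a b c a' b' c' : ℕ} (h : mk3 a b c = mk3 a' b' c') :
    a = a' ∧ b = b' ∧ c = c' := by
  refine ⟨?_, ?_, ?_⟩
  · have := DFunLike.congr_fun h 0; simpa using this
  · have := DFunLike.congr_fun h 1; simpa using this
  · have := DFunLike.congr_fun h 2; simpa using this

lemma mk3_sum (a b c : ℕ) : ((mk3 a b c).sum fun _ v => v) = a + b + c := by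
  rw [Finsupp.sum_fintype _ _ (fun _ => rfl), Fin.sum_univ_three]
  simp

lemma mk3_add_single1 (a b c : ℕ) : mk3 a b c + Finsupp.single 1 1 = mk3 a (b + 1) c := by
  ext i; fin_cases i <;> simp [Finsupp.single_apply]

lemma mk3_add_single2 (a b c : ℕ) : mk3 a b c + Finsupp.single 2 1 = mk3 a b (c + 1) := by
  ext i; fin_cases i <;> simp [Finsupp.single_apply]

lemma single1_add_mk3 (a b c : ℕ) : Finsupp.single 1 1 + mk3 a b c = mk3 a (b + 1) c := by
  rw [add_comm]; exact mk3_add_single1 a b c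

lemma single2_add_mk3 (a b c : ℕ) : Finsupp.single 2 1 + mk3 a b c = mk3 a b (c + 1) := by
  rw [add_comm]; exact mk3_add_single2 a b c

lemma coeff_X_mul_add (s : Fin 3) (f : PS) (d : Fin 3 →₀ ℕ) :
    MvPowerSeries.coeff (R := ℝ) (Finsupp.single s 1 + d) (MvPowerSeries.X s * f) =
      MvPowerSeries.coeff (R := ℝ) d f := by
  have := MvPowerSeries.coeff_add_monomial_mul (R := ℝ) (m := Finsupp.single s 1) (n := d) f 1
  rw [MvPowerSeries.X_def]
  simpa using this

lemma coeff_X_mul_zero (s : Fin 3) (f : PS) (d : Fin 3 →₀ ℕ) (hd : d s = 0) :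
    MvPowerSeries.coeff (R := ℝ) d (MvPowerSeries.X s * f) = 0 := by
  have := MvPowerSeries.coeff_monomial_mul (R := ℝ) (m := d) (n := Finsupp.single s 1) (φ := f) 1
  rw [MvPowerSeries.X_def, this, if_neg]
  intro hle
  have := hle s
  simp [hd] at this

def Rot (g : PS) : PS := MvPowerSeries.X 2 * psD 1 g - MvPowerSeries.X 1 * psD 2 g

lemma psD1_coeff (g : PS) (a b c : ℕ) :
    MvPowerSeries.coeff (R := ℝ) (mk3 a b c) (psD 1 g) = ((b : ℝ) + 1) * g (mk3 a (b + 1) c) := by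
  rw [MvPowerSeries.coeff_apply]
  show ((mk3 a b c 1 : ℝ) + 1) * g (mk3 a b c + Finsupp.single 1 1) = _
  rw [mk3_add_single1, mk3_apply1]

lemma psD2_coeff (g : PS) (a b c : ℕ) :
    MvPowerSeries.coeff (R := ℝ) (mk3 a b c) (psD 2 g) = ((c : ℝ) + 1) * g (mk3 a b (c + 1)) := by
  rw [MvPowerSeries.coeff_apply]
  show ((mk3 a b c 2 : ℝ) + 1) * g (mk3 a b c + Finsupp.single 2 1) = _
  rw [mk3_add_single2, mk3_apply2]

lemma rot_coeff_ss (g : PS) (a b c : ℕ) :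
    MvPowerSeries.coeff (R := ℝ) (mk3 a (b + 1) (c + 1)) (Rot g) =
      ((b : ℝ) + 2) * g (mk3 a (b + 2) c) - ((c : ℝ) + 2) * g (mk3 a b (c + 2)) := by
  rw [Rot, map_sub, ← single2_add_mk3 a (b+1) c, coeff_X_mul_add, psD1_coeff,
    single2_add_mk3, ← single1_add_mk3 a b (c+1), coeff_X_mul_add, psD2_coeff]
  push_cast; ring_nf

lemma rot_coeff_0s (g : PS) (a c : ℕ) :
    MvPowerSeries.coeff (R := ℝ) (mk3 a 0 (c + 1)) (Rot g) = g (mk3 a 1 c) := by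
  rw [Rot, map_sub, ← single2_add_mk3 a 0 c, coeff_X_mul_add, psD1_coeff, single2_add_mk3,
    coeff_X_mul_zero 1 _ _ (by simp)]
  simp

lemma rot_coeff_s0 (g : PS) (a b : ℕ) :
    MvPowerSeries.coeff (R := ℝ) (mk3 a (b + 1) 0) (Rot g) = -g (mk3 a b 1) := by
  rw [Rot, map_sub, coeff_X_mul_zero 2 _ _ (by simp), ← single1_add_mk3 a b 0,
    coeff_X_mul_add, psD2_coeff]
  simp

lemma rot_coeff_00 (g : PS) (a : ℕ) : MvPowerSeries.coeff (R := ℝ) (mk3 a 0 0) (Rot g) = 0 := by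
  rw [Rot, map_sub, coeff_X_mul_zero 2 _ _ (by simp), coeff_X_mul_zero 1 _ _ (by simp)]
  simp

lemma rot_eq_zero_iff (g : PS) :
    Rot g = 0 ↔ (∀ a c : ℕ, g (mk3 a 1 c) = 0) ∧ (∀ a b : ℕ, g (mk3 a b 1) = 0) ∧
      (∀ a b c : ℕ, ((b : ℝ) + 2) * g (mk3 a (b + 2) c) = ((c : ℝ) + 2) * g (mk3 a b (c + 2))) := by
  rw [MvPowerSeries.ext_iff]
  constructor
  · intro h
    refine ⟨fun a c => ?_, fun a b => ?_, fun a b c => ?_⟩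
    · have := h (mk3 a 0 (c+1)); rw [rot_coeff_0s, map_zero] at this; exact this
    · have := h (mk3 a (b+1) 0); rw [rot_coeff_s0, map_zero] at this; linarith
    · have := h (mk3 a (b+1) (c+1)); rw [rot_coeff_ss, map_zero] at this; linarith
  · rintro ⟨h1, h2, h3⟩ d
    rw [map_zero]
    obtain ⟨a, b, c, rfl⟩ := mk3_surj d
    match b, c with
    | 0, 0 => exact rot_coeff_00 g a
    | 0, c+1 => rw [rot_coeff_0s]; exact h1 a c
    | b+1, 0 => rw [rot_coeff_s0, h2 a b, neg_zero]
    | b+1, c+1 => rw [rot_coeff_ss]; have := h3 a b c; linarith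

lemma choose_id (i j : ℕ) :
    (i + 1) * (i + j + 1).choose (i + 1) = (j + 1) * (i + j + 1).choose i := by
  have h1 := Nat.add_one_mul_choose_eq (i + j) i
  have h2 := Nat.add_one_mul_choose_eq (j + i) j
  have h3 : (i + j).choose i = (i + j).choose j := by
    have := Nat.choose_symm (Nat.le_add_left j i)
    simpa using this
  have h4 : (i + j + 1).choose i = (i + j + 1).choose (j + 1) := by
    have := Nat.choose_symm (n := i + j + 1) (k := j + 1) (by omega)
    have e : i + j + 1 - (j + 1) = i := by omega
    rw [e] at this
    exact this
  calc (i + 1) * (i + j + 1).choose (i + 1) = (i + j + 1).choose (i + 1) * (i + 1) := by ring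
    _ = (i + j + 1) * (i + j).choose i := h1.symm
    _ = (i + j + 1) * (i + j).choose j := by rw [h3]
    _ = (j + i + 1) * (j + i).choose j := by rw [Nat.add_comm i j]
    _ = (j + i + 1).choose (j + 1) * (j + 1) := h2
    _ = (i + j + 1).choose (j + 1) * (j + 1) := by rw [Nat.add_comm j i]
    _ = (j + 1) * (i + j + 1).choose i := by rw [← h4]; ring

lemma struct (g : PS)
    (h1 : ∀ a c : ℕ, g (mk3 a 1 c) = 0) (h2 : ∀ a b : ℕ, g (mk3 a b 1) = 0)
    (h3 : ∀ a b c : ℕ, ((b : ℝ) + 2) * g (mk3 a (b + 2) c) = ((c : ℝ) + 2) * g (mk3 a b (c + 2))) :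
    (∀ a i c : ℕ, g (mk3 a (2 * i + 1) c) = 0) ∧ (∀ a b j : ℕ, g (mk3 a b (2 * j + 1)) = 0) ∧
      (∀ a i j : ℕ, g (mk3 a (2 * i) (2 * j)) =
        ((i + j).choose i : ℝ) * g (mk3 a (2 * (i + j)) 0)) := by
  have oddb : ∀ i a c : ℕ, g (mk3 a (2 * i + 1) c) = 0 := by
    intro i
    induction i with
    | zero => intro a c; simpa using h1 a c
    | succ n ih =>
      intro a c
      have key := h3 a (2 * n + 1) c
      rw [ih a (c + 2)] at key
      simp only [mul_zero] at key
      have hb : (2 * (n + 1) + 1) = (2 * n + 1) + 2 := by omega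
      rw [hb]
      have hne : ((2 * n + 1 : ℕ) : ℝ) + 2 ≠ 0 := by positivity
      rcases mul_eq_zero.mp key with h | h
      · exact absurd h hne
      · exact h
  have oddc : ∀ j a b : ℕ, g (mk3 a b (2 * j + 1)) = 0 := by
    intro j
    induction j with
    | zero => intro a b; simpa using h2 a b
    | succ n ih =>
      intro a b
      have key := h3 a b (2 * n + 1)
      rw [ih a (b + 2)] at key
      simp only [mul_zero] at key
      have hc : (2 * (n + 1) + 1) = (2 * n + 1) + 2 := by omega
      rw [hc]
      have hne : ((2 * n + 1 : ℕ) : ℝ) + 2 ≠ 0 := by positivity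
      rcases mul_eq_zero.mp key.symm with h | h
      · exact absurd h hne
      · exact h
  refine ⟨fun a i c => oddb i a c, fun a b j => oddc j a b, ?_⟩
  have ee : ∀ j i a : ℕ, g (mk3 a (2 * i) (2 * j)) =
      ((i + j).choose i : ℝ) * g (mk3 a (2 * (i + j)) 0) := by
    intro j
    induction j with
    | zero => intro i a; simp
    | succ n ih =>
      intro i a
      have key := h3 a (2 * i) (2 * n)
      have e1 : 2 * i + 2 = 2 * (i + 1) := by omega
      have e2 : 2 * n + 2 = 2 * (n + 1) := by omega
      rw [e1, e2, ih (i + 1) a] at key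
      have e3 : i + 1 + n = i + n + 1 := by omega
      rw [e3] at key
      have hcidR : ((i : ℝ) + 1) * ((i + n + 1).choose (i + 1) : ℝ)
          = ((n : ℝ) + 1) * ((i + n + 1).choose i : ℝ) := by
        exact_mod_cast choose_id i n
      have hne : ((2 * n : ℕ) : ℝ) + 2 ≠ 0 := by positivity
      have e4 : i + (n + 1) = i + n + 1 := by omega
      rw [e4]
      apply mul_left_cancel₀ hne
      rw [← key]
      push_cast
      linear_combination (2 : ℝ) * g (mk3 a (2 * (i + n + 1)) 0) * hcidR
  intro a i j; exact ee j i a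

lemma subMon_eq (e : Fin 2 →₀ ℕ) : subMon e = ∑ k ∈ Finset.range (e 1 + 1),
    MvPowerSeries.monomial (R := ℝ) (mk3 (e 0) (2 * k) (2 * (e 1 - k))) (((e 1).choose k : ℕ) : ℝ) := by
  rw [subMon, add_pow, Finset.mul_sum]
  refine Finset.sum_congr rfl fun k hk => ?_
  rw [← pow_mul, ← pow_mul, MvPowerSeries.X_pow_eq, MvPowerSeries.X_pow_eq,
    MvPowerSeries.X_pow_eq,
    ← map_natCast (MvPowerSeries.C (σ := Fin 3) (R := ℝ)) ((e 1).choose k),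
    ← MvPowerSeries.monomial_zero_eq_C_apply]
  simp only [MvPowerSeries.monomial_mul_monomial, one_mul, mul_one]
  have hidx : Finsupp.single (0 : Fin 3) (e 0) +
      (Finsupp.single 1 (2 * k) + Finsupp.single 2 (2 * (e 1 - k)) + 0) =
      mk3 (e 0) (2 * k) (2 * (e 1 - k)) := by
    ext i; fin_cases i <;> simp [mk3, Finsupp.single_apply]
  rw [hidx]

lemma coeff_subMon (e : Fin 2 →₀ ℕ) (a b c : ℕ) :
    MvPowerSeries.coeff (R := ℝ) (mk3 a b c) (subMon e) =
      if e 0 = a ∧ 2 * e 1 = b + c ∧ b % 2 = 0 then ((e 1).choose (b / 2) : ℝ) else 0 := by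
  rw [subMon_eq, map_sum]
  simp only [MvPowerSeries.coeff_monomial]
  by_cases hC : e 0 = a ∧ 2 * e 1 = b + c ∧ b % 2 = 0
  · obtain ⟨h0, h1, h2⟩ := hC
    rw [if_pos ⟨h0, h1, h2⟩]
    rw [Finset.sum_eq_single_of_mem (b / 2) (Finset.mem_range.mpr (by omega))]
    · rw [if_pos]
      have hb : 2 * (b / 2) = b := by omega
      have hc : 2 * (e 1 - b / 2) = c := by omega
      rw [h0, hb, hc]
    · intro k hk hkne
      rw [if_neg]
      intro hEq
      obtain ⟨-, hb, -⟩ := mk3_inj hEq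
      omega
  · rw [if_neg hC]
    refine Finset.sum_eq_zero fun k hk => ?_
    rw [if_neg]
    intro hEq
    obtain ⟨ha, hb, hcc⟩ := mk3_inj hEq
    rw [Finset.mem_range] at hk
    exact hC ⟨ha.symm, by omega, by omega⟩

lemma coeff_subst2 (h : MvPowerSeries (Fin 2) ℝ) (a b c : ℕ) :
    subst2 h (mk3 a b c) =
      if b % 2 = 0 ∧ c % 2 = 0 then
        (((b + c) / 2).choose (b / 2) : ℝ) *
          h (Finsupp.single 0 a + Finsupp.single 1 ((b + c) / 2))
      else 0 := by
  show (∑ e ∈ Finset.Iic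
      (Finsupp.single (0 : Fin 2) ((mk3 a b c).sum fun _ v => v) +
        Finsupp.single 1 ((mk3 a b c).sum fun _ v => v)),
      MvPowerSeries.coeff (R := ℝ) e h * MvPowerSeries.coeff (R := ℝ) (mk3 a b c) (subMon e)) = _
  rw [mk3_sum]
  simp only [coeff_subMon]
  simp only [MvPowerSeries.coeff_apply]
  by_cases hP : b % 2 = 0 ∧ c % 2 = 0
  · rw [if_pos hP]
    obtain ⟨hb, hc⟩ := hP
    set eS : Fin 2 →₀ ℕ := Finsupp.single 0 a + Finsupp.single 1 ((b + c) / 2) with heS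
    have heS0 : eS 0 = a := by simp [heS, Finsupp.single_apply]
    have heS1 : eS 1 = (b + c) / 2 := by simp [heS, Finsupp.single_apply]
    rw [Finset.sum_eq_single_of_mem eS]
    · rw [if_pos ⟨heS0, by omega, hb⟩, heS1, mul_comm]
    · rw [Finset.mem_Iic, Finsupp.le_def]
      intro i
      fin_cases i
      · simp [heS, Finsupp.single_apply]; omega
      · simp [heS, Finsupp.single_apply]; omega
    · intro e he hene
      rw [if_neg]
      · exact mul_zero _
      rintro ⟨h0, h1, -⟩
      apply hene
      ext i
      fin_cases i
      · show e 0 = eS 0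
        rw [h0, heS0]
      · show e 1 = eS 1
        rw [heS1]; omega
  · rw [if_neg hP]
    refine Finset.sum_eq_zero fun e he => ?_
    rw [if_neg, mul_zero]
    rintro ⟨-, h1, h2⟩
    exact hP ⟨h2, by omega⟩

lemma pair_apply0 (a n : ℕ) :
    (Finsupp.single (0 : Fin 2) a + Finsupp.single 1 n : Fin 2 →₀ ℕ) 0 = a := by
  rw [Finsupp.add_apply]; simp [Finsupp.single_apply]
lemma pair_apply1 (a n : ℕ) :
    (Finsupp.single (0 : Fin 2) a + Finsupp.single 1 n : Fin 2 →₀ ℕ) 1 = n := by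
  rw [Finsupp.add_apply]; simp [Finsupp.single_apply]


/-- for any nonzero finite linear combination `v = Σ b^m_n Θ^m_n`
(`0 ≤ m ≤ n`), a formal power series `g` satisfies `v(g) = 0` if and only if `g` lies in
the image of the substitution homomorphism `ℝ[[u,w]] → ℝ[[x,y,z]]`, `u ↦ x`, `w ↦ y²+z²`:
the algebra of formal first integrals of `v` is the closed subalgebra generated by `x` and
`y²+z²`. -/
theorem firstIntegrals_of_nonzero_theta_combination
    (S : Finset (ℤ × ℤ)) (b : ℤ × ℤ → ℝ) (hS : ∀ p ∈ S, 0 ≤ p.1 ∧ p.1 ≤ p.2)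
    (v : Fin 3 → PS) (hv : v = fun i => ∑ p ∈ S, b p • Tps p.1 p.2 i) (hv0 : v ≠ 0)
    (g : PS) :
    psApply v g = 0 ↔ ∃ h : MvPowerSeries (Fin 2) ℝ, g = subst2 h := by
  set P : PS := ∑ p ∈ S, MvPowerSeries.C (σ := Fin 3) (R := ℝ) (b p) * MvPowerSeries.X 0 ^ p.1.toNat *
    (MvPowerSeries.X 1 ^ 2 + MvPowerSeries.X 2 ^ 2) ^ (p.2 - p.1).toNat with hP
  have hv0' : v 0 = 0 := by
    rw [hv]
    show (∑ p ∈ S, b p • Tps p.1 p.2 0) = 0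
    refine Finset.sum_eq_zero fun p _ => ?_
    simp [Tps]
  have hv1 : v 1 = P * MvPowerSeries.X 2 := by
    rw [hv]
    show (∑ p ∈ S, b p • Tps p.1 p.2 1) = P * MvPowerSeries.X 2
    rw [hP, Finset.sum_mul]
    refine Finset.sum_congr rfl fun p _ => ?_
    simp only [Tps, Matrix.cons_val_one, Matrix.head_cons, Matrix.cons_val_zero]
    rw [MvPowerSeries.smul_eq_C_mul]
    ring
  have hv2 : v 2 = -(P * MvPowerSeries.X 1) := by
    rw [hv]
    show (∑ p ∈ S, b p • Tps p.1 p.2 2) = -(P * MvPowerSeries.X 1)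
    rw [hP, Finset.sum_mul, ← Finset.sum_neg_distrib]
    refine Finset.sum_congr rfl fun p _ => ?_
    simp only [Tps, Matrix.cons_val_two, Matrix.tail_cons, Matrix.head_cons]
    rw [MvPowerSeries.smul_eq_C_mul]
    ring
  have hfact : psApply v g = P * Rot g := by
    rw [psApply, Fin.sum_univ_three, hv0', hv1, hv2, Rot]
    ring
  have hPne : P ≠ 0 := by
    intro h0
    apply hv0
    funext i
    fin_cases i
    · show v 0 = (0 : Fin 3 → PS) 0
      rw [hv0']; rfl
    · show v 1 = (0 : Fin 3 → PS) 1
      rw [hv1, h0, zero_mul]; rfl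
    · show v 2 = (0 : Fin 3 → PS) 2
      rw [hv2, h0, zero_mul, neg_zero]; rfl
  constructor
  · intro hzero
    rw [hfact] at hzero
    have hrot : Rot g = 0 := by
      rcases mul_eq_zero.mp hzero with h | h
      · exact absurd h hPne
      · exact h
    obtain ⟨h1, h2, h3⟩ := (rot_eq_zero_iff g).mp hrot
    obtain ⟨hob, hoc, hee⟩ := struct g h1 h2 h3
    refine ⟨fun e => g (mk3 (e 0) (2 * e 1) 0), ?_⟩
    apply MvPowerSeries.ext
    intro d
    rw [MvPowerSeries.coeff_apply, MvPowerSeries.coeff_apply]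
    obtain ⟨a, bb, cc, rfl⟩ := mk3_surj d
    erw [coeff_subst2]
    by_cases hb : bb % 2 = 0
    · by_cases hc : cc % 2 = 0
      · rw [if_pos ⟨hb, hc⟩]
        rw [pair_apply0, pair_apply1]
        have key := hee a (bb / 2) (cc / 2)
        have e1 : 2 * (bb / 2) = bb := by omega
        have e2 : 2 * (cc / 2) = cc := by omega
        have e3 : bb / 2 + cc / 2 = (bb + cc) / 2 := by omega
        rw [e1, e2, e3] at key
        exact key
      · rw [if_neg (by tauto)]
        have key := hoc a bb (cc / 2)
        have e1 : 2 * (cc / 2) + 1 = cc := by omega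
        rwa [e1] at key
    · rw [if_neg (by tauto)]
      have key := hob a (bb / 2) cc
      have e1 : 2 * (bb / 2) + 1 = bb := by omega
      rwa [e1] at key
  · rintro ⟨h, rfl⟩
    rw [hfact]
    have hrot : Rot (subst2 h) = 0 := by
      rw [rot_eq_zero_iff]
      refine ⟨fun a c => ?_, fun a bb => ?_, fun a bb cc => ?_⟩
      · rw [coeff_subst2, if_neg (by omega)]
      · rw [coeff_subst2, if_neg (by omega)]
      · by_cases hb : bb % 2 = 0
        · by_cases hc : cc % 2 = 0
          · rw [coeff_subst2, coeff_subst2, if_pos ⟨by omega, hc⟩, if_pos ⟨hb, by omega⟩]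
            have e1 : (bb + 2 + cc) / 2 = (bb + cc) / 2 + 1 := by omega
            have e2 : (bb + (cc + 2)) / 2 = (bb + cc) / 2 + 1 := by omega
            have e3 : (bb + 2) / 2 = bb / 2 + 1 := by omega
            rw [e1, e2, e3]
            have e4 : (bb + cc) / 2 + 1 = bb / 2 + cc / 2 + 1 := by omega
            rw [e4]
            set H := h (Finsupp.single 0 a + Finsupp.single 1 (bb / 2 + cc / 2 + 1)) with hH
            have hcid := choose_id (bb / 2) (cc / 2)
            have hR : (((bb / 2 : ℕ) : ℝ) + 1) * ((bb / 2 + cc / 2 + 1).choose (bb / 2 + 1) : ℝ)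
                = (((cc / 2 : ℕ) : ℝ) + 1) * ((bb / 2 + cc / 2 + 1).choose (bb / 2) : ℝ) := by
              exact_mod_cast hcid
            have hbR : (bb : ℝ) = 2 * ((bb / 2 : ℕ) : ℝ) := by exact_mod_cast (by omega : bb = 2 * (bb / 2))
            have hcR : (cc : ℝ) = 2 * ((cc / 2 : ℕ) : ℝ) := by exact_mod_cast (by omega : cc = 2 * (cc / 2))
            rw [hbR, hcR]
            linear_combination 2 * H * hR
          · rw [coeff_subst2, coeff_subst2, if_neg (by omega), if_neg (by omega),
              mul_zero, mul_zero]
        · rw [coeff_subst2, coeff_subst2, if_neg (by omega), if_neg (by omega),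
            mul_zero, mul_zero]
    rw [hrot, mul_zero]
end
end

section
/- The vector field E := x⁷(y²+z²)(2x ∂_x + y ∂_y + z ∂_z) on ℝ³ has no nonconstant formal first integral: if g ∈ ℝ[[x,y,z]] satisfies x⁷(y²+z²)(2x ∂g/∂x + y ∂g/∂y + z ∂g/∂z) = 0, then g is a constant. -/
noncomputable section

open MvPowerSeries Finsupp in
private lemma coeff_apply' (f : PS) (d : Fin 3 →₀ ℕ) : MvPowerSeries.coeff (R := ℝ) d f = f d := rfl

private lemma key_coeff (i : Fin 3) (g : PS) (d : Fin 3 →₀ ℕ) :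
    MvPowerSeries.coeff (R := ℝ) d (MvPowerSeries.X i * psD i g) = (d i : ℝ) * g d := by
  rw [show (MvPowerSeries.X i : PS) = MvPowerSeries.monomial (R := ℝ) (Finsupp.single i 1) 1 from rfl,
    MvPowerSeries.coeff_monomial_mul]
  by_cases hd : Finsupp.single i 1 ≤ d
  · rw [if_pos hd, one_mul, coeff_apply']
    have hsub : (d - Finsupp.single i 1) + Finsupp.single i 1 = d := tsub_add_cancel_of_le hd
    have h1 : (1:ℕ) ≤ d i := Finsupp.single_le_iff.mp hd
    simp only [psD, hsub]
    congr 1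
    rw [Finsupp.tsub_apply, Finsupp.single_apply, if_pos rfl]
    push_cast [h1]
    ring
  · rw [if_neg hd]
    have : d i = 0 := by
      by_contra hne
      exact hd (Finsupp.single_le_iff.mpr (Nat.one_le_iff_ne_zero.mpr hne))
    simp [this]

/-- the vector field `E := x⁷(y²+z²)(2x ∂_x + y ∂_y + z ∂_z)` has no
nonconstant formal first integral: if `x⁷(y²+z²)(2x ∂g/∂x + y ∂g/∂y + z ∂g/∂z) = 0`
then `g` is a constant. -/
theorem no_nonconstant_first_integral (g : PS)
    (h : MvPowerSeries.X 0 ^ 7 * (MvPowerSeries.X 1 ^ 2 + MvPowerSeries.X 2 ^ 2) *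
      (2 * MvPowerSeries.X 0 * psD 0 g + MvPowerSeries.X 1 * psD 1 g +
        MvPowerSeries.X 2 * psD 2 g) = 0) :
    ∃ c : ℝ, g = MvPowerSeries.C (σ := Fin 3) (R := ℝ) c := by
  have hX0 : (MvPowerSeries.X 0 : PS) ≠ 0 := by
    intro hc
    have := congrArg (MvPowerSeries.coeff (R := ℝ) (Finsupp.single 0 1)) hc
    simpa [MvPowerSeries.coeff_X] using this
  have hYZ : (MvPowerSeries.X 1 ^ 2 + MvPowerSeries.X 2 ^ 2 : PS) ≠ 0 := by
    intro hc
    have := congrArg (MvPowerSeries.coeff (R := ℝ) (Finsupp.single 1 2)) hc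
    simp [MvPowerSeries.coeff_X_pow, Finsupp.single_eq_single_iff] at this
  have hfac : (MvPowerSeries.X 0 ^ 7 *
      (MvPowerSeries.X 1 ^ 2 + MvPowerSeries.X 2 ^ 2) : PS) ≠ 0 :=
    mul_ne_zero (pow_ne_zero _ hX0) hYZ
  have h2 : 2 * MvPowerSeries.X 0 * psD 0 g + MvPowerSeries.X 1 * psD 1 g +
      MvPowerSeries.X 2 * psD 2 g = 0 := (mul_eq_zero.mp h).resolve_left hfac
  have hco : ∀ d : Fin 3 →₀ ℕ, ((2 * (d 0) + d 1 + d 2 : ℕ) : ℝ) * g d = 0 := by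
    intro d
    have hc := congrArg (MvPowerSeries.coeff (R := ℝ) d) h2
    rw [map_add, map_add, map_zero] at hc
    have e0 : MvPowerSeries.coeff (R := ℝ) d (2 * MvPowerSeries.X 0 * psD 0 g)
        = 2 * (d 0 : ℝ) * g d := by
      have hr : (2 : PS) * MvPowerSeries.X 0 * psD 0 g
          = MvPowerSeries.X 0 * psD 0 g + MvPowerSeries.X 0 * psD 0 g := by ring
      rw [hr, map_add, key_coeff]; ring
    rw [e0, key_coeff, key_coeff] at hc
    push_cast
    linarith [hc]
  refine ⟨g 0, ?_⟩
  ext d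
  rw [MvPowerSeries.coeff_C, coeff_apply']
  by_cases hd : d = 0
  · simp [hd]
  · rw [if_neg hd]
    have hne : (2 * (d 0) + d 1 + d 2 : ℕ) ≠ 0 := by
      obtain ⟨i, hi⟩ := Finsupp.ne_iff.mp hd
      simp only [Finsupp.coe_zero, Pi.zero_apply] at hi
      fin_cases i <;> simp at hi <;> omega
    have := hco d
    rcases mul_eq_zero.mp this with h' | h'
    · exact absurd h' (by exact_mod_cast hne)
    · exact h'
end
end

section
/- Fix an integer p ≥ 1, a sign ε ∈ {+1, −1}, real coefficients α_{p+1}, …, α_N, integers −1 ≤ n_1, …, n_r ≤ N−1, real parameters μ_1, …, μ_r, and an arbitrary formal power series g ∈ ℝ[[x]]. Consider the vector field w on ℝ³ given by ẋ = (y²+z²) + ε x^{p+1} + Σ_{i=1}^r μ_i x^{n_i+1} + Σ_{k=p+1}^N α_k x^{k+1}, ẏ = z g(x) − ε((p+1)/2) x^p y − Σ_{i=1}^r ((n_i+1)/2) μ_i x^{n_i} y − Σ_{k=p+1}^N ((k+1)/2) α_k x^k y, ż = −y g(x) − ε((p+1)/2) x^p z − Σ_{i=1}^r ((n_i+1)/2)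 μ_i x^{n_i} z − Σ_{k=p+1}^N ((k+1)/2) α_k x^k z. Then the function f(x,y,z) := (y²+z²)·( (1/2)(y²+z²) + ε x^{p+1} + Σ_{i=1}^r μ_i x^{n_i+1} + Σ_{k=p+1}^N α_k x^{k+1} ) is a first integral of w, i.e. w(f) = 0. -/
noncomputable section

open MvPowerSeries

lemma psD_coeff (i : Fin 3) (f : PS) (d : Fin 3 →₀ ℕ) :
    coeff d (psD i f) = ((d i : ℝ) + 1) * coeff (d + Finsupp.single i 1) f := rfl

lemma psD_add (i : Fin 3) (f g : PS) : psD i (f + g) = psD i f + psD i g := by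
  ext d
  rw [map_add, psD_coeff, psD_coeff, psD_coeff, map_add]
  ring

lemma psD_smul (i : Fin 3) (r : ℝ) (f : PS) : psD i (r • f) = r • psD i f := by
  ext d
  rw [map_smul, psD_coeff, psD_coeff, map_smul]
  simp; ring

lemma sum_swap_ad (n : Fin 3 →₀ ℕ) (G : (Fin 3 →₀ ℕ) → (Fin 3 →₀ ℕ) → ℝ) :
    ∑ p ∈ Finset.HasAntidiagonal.antidiagonal n, G p.1 p.2 = ∑ p ∈ Finset.HasAntidiagonal.antidiagonal n, G p.2 p.1 := by
  apply Finset.sum_nbij' (fun p => (p.2, p.1)) (fun p => (p.2, p.1)) <;>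
    simp +contextual [Finset.mem_antidiagonal, add_comm]

lemma key_shift (d : Fin 3 →₀ ℕ) (i : Fin 3) (F : (Fin 3 →₀ ℕ) → (Fin 3 →₀ ℕ) → ℝ) :
    (∑ p ∈ Finset.HasAntidiagonal.antidiagonal (d + Finsupp.single i 1),
        (((p : (Fin 3 →₀ ℕ) × (Fin 3 →₀ ℕ)).1 i : ℝ)) * F p.1 p.2)
    = ∑ p ∈ Finset.HasAntidiagonal.antidiagonal d,
        (((p : (Fin 3 →₀ ℕ) × (Fin 3 →₀ ℕ)).1 i : ℝ) + 1) * F (p.1 + Finsupp.single i 1) p.2 := by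
  rw [← Finset.sum_filter_of_ne (p := fun q => q.1 i ≠ 0)
    (by intro x _ hx h0; exact hx (by simp [h0]))]
  apply Finset.sum_nbij' (fun p => (p.1 - Finsupp.single i 1, p.2))
    (fun q => (q.1 + Finsupp.single i 1, q.2))
  · intro p hp
    simp only [Finset.mem_filter, Finset.HasAntidiagonal.mem_antidiagonal] at hp
    obtain ⟨hsum, hne⟩ := hp
    have hle : Finsupp.single i 1 ≤ p.1 := by
      rw [Finsupp.single_le_iff]; omega
    have hc : p.1 - Finsupp.single i 1 + Finsupp.single i 1 = p.1 :=
      tsub_add_cancel_of_le hle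
    simp only [Finset.HasAntidiagonal.mem_antidiagonal]
    have h2 : p.1 - Finsupp.single i 1 + Finsupp.single i 1 + p.2 = d + Finsupp.single i 1 := by
      rw [hc]; exact hsum
    rw [add_right_comm] at h2
    exact add_right_cancel h2
  · intro q hq
    simp only [Finset.HasAntidiagonal.mem_antidiagonal] at hq
    simp only [Finset.mem_filter, Finset.HasAntidiagonal.mem_antidiagonal]
    constructor
    · rw [add_right_comm, hq]
    · simp
  · intro p hp
    simp only [Finset.mem_filter, Finset.HasAntidiagonal.mem_antidiagonal] at hp
    have hle : Finsupp.single i 1 ≤ p.1 := by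
      rw [Finsupp.single_le_iff]; omega
    simp [tsub_add_cancel_of_le hle]
  · intro q hq
    simp
  · intro p hp
    simp only [Finset.mem_filter, Finset.HasAntidiagonal.mem_antidiagonal] at hp
    have hle : Finsupp.single i 1 ≤ p.1 := by
      rw [Finsupp.single_le_iff]; omega
    have hc : p.1 - Finsupp.single i 1 + Finsupp.single i 1 = p.1 :=
      tsub_add_cancel_of_le hle
    dsimp only
    rw [hc]
    congr 1
    have h4 : ((p.1 - Finsupp.single i 1 : Fin 3 →₀ ℕ)) i = p.1 i - 1 := by
      simp [Finsupp.tsub_apply]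
    rw [h4]
    have h5 : 1 ≤ p.1 i := by omega
    rw [Nat.cast_sub h5]
    push_cast
    ring

lemma psD_mul (i : Fin 3) (f g : PS) : psD i (f * g) = psD i f * g + f * psD i g := by
  ext d
  rw [map_add, psD_coeff, coeff_mul, coeff_mul, coeff_mul]
  simp only [psD_coeff]
  rw [Finset.mul_sum]
  have step1 : ∑ p ∈ Finset.HasAntidiagonal.antidiagonal (d + Finsupp.single i 1),
      ((d i : ℝ) + 1) * (coeff p.1 f * coeff p.2 g)
      = (∑ p ∈ Finset.HasAntidiagonal.antidiagonal (d + Finsupp.single i 1),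
          (((p : (Fin 3 →₀ ℕ) × (Fin 3 →₀ ℕ)).1 i : ℝ)) * (coeff p.1 f * coeff p.2 g))
        + ∑ p ∈ Finset.HasAntidiagonal.antidiagonal (d + Finsupp.single i 1),
          (((p : (Fin 3 →₀ ℕ) × (Fin 3 →₀ ℕ)).2 i : ℝ)) * (coeff p.1 f * coeff p.2 g) := by
    rw [← Finset.sum_add_distrib]
    apply Finset.sum_congr rfl
    intro p hp
    rw [Finset.HasAntidiagonal.mem_antidiagonal] at hp
    have h1 := congrArg (fun u => u i) hp
    simp at h1
    have h2 : ((d i + 1 : ℕ) : ℝ) = ((p.1 i + p.2 i : ℕ) : ℝ) := by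
      congr 1; omega
    push_cast at h2
    rw [show (d i : ℝ) + 1 = (p.1 i : ℝ) + p.2 i from h2]
    ring
  rw [step1, key_shift d i (fun u v => coeff u f * coeff v g)]
  congr 1
  · apply Finset.sum_congr rfl; intro p _; ring
  · have e1 : (∑ p ∈ Finset.HasAntidiagonal.antidiagonal (d + Finsupp.single i 1),
        (((p : (Fin 3 →₀ ℕ) × (Fin 3 →₀ ℕ)).2 i : ℝ)) * (coeff p.1 f * coeff p.2 g))
        = ∑ p ∈ Finset.HasAntidiagonal.antidiagonal (d + Finsupp.single i 1),
        (((p : (Fin 3 →₀ ℕ) × (Fin 3 →₀ ℕ)).1 i : ℝ)) * (coeff p.2 f * coeff p.1 g) :=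
      sum_swap_ad _ (fun u v => (((v : Fin 3 →₀ ℕ)) i : ℝ) * (coeff u f * coeff v g))
    have e2 : (∑ p ∈ Finset.HasAntidiagonal.antidiagonal (d + Finsupp.single i 1),
        (((p : (Fin 3 →₀ ℕ) × (Fin 3 →₀ ℕ)).1 i : ℝ)) * (coeff p.2 f * coeff p.1 g))
        = ∑ p ∈ Finset.HasAntidiagonal.antidiagonal d,
        (((p : (Fin 3 →₀ ℕ) × (Fin 3 →₀ ℕ)).1 i : ℝ) + 1) *
          (coeff p.2 f * coeff (p.1 + Finsupp.single i 1) g) := by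
      have := key_shift d i (fun u v => coeff v f * coeff u g)
      simpa using this
    have e3 : (∑ p ∈ Finset.HasAntidiagonal.antidiagonal d,
        (((p : (Fin 3 →₀ ℕ) × (Fin 3 →₀ ℕ)).1 i : ℝ) + 1) *
          (coeff p.2 f * coeff (p.1 + Finsupp.single i 1) g))
        = ∑ p ∈ Finset.HasAntidiagonal.antidiagonal d,
        (((p : (Fin 3 →₀ ℕ) × (Fin 3 →₀ ℕ)).2 i : ℝ) + 1) *
          (coeff p.1 f * coeff (p.2 + Finsupp.single i 1) g) :=
      sum_swap_ad _ (fun u v => ((((u : Fin 3 →₀ ℕ)) i : ℝ) + 1) *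
        (coeff v f * coeff (u + Finsupp.single i 1) g))
    rw [e1, e2, e3]
    apply Finset.sum_congr rfl; intro p _; ring

lemma psD_zero (i : Fin 3) : psD i (0 : PS) = 0 := by
  ext d
  rw [psD_coeff]
  simp

lemma psD_C (i : Fin 3) (r : ℝ) : psD i (C (σ := Fin 3) (R := ℝ) r) = 0 := by
  ext d
  rw [psD_coeff, coeff_C]
  have : d + Finsupp.single i 1 ≠ 0 := by
    intro h
    have := congrArg (fun u => u i) h
    simp at this
  simp [this]

lemma psD_one (i : Fin 3) : psD i (1 : PS) = 0 := by
  have : (1 : PS) = C (σ := Fin 3) (R := ℝ) 1 := by simp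
  rw [this, psD_C]

lemma psD_X_self (i : Fin 3) : psD i (X i : PS) = 1 := by
  ext d
  rw [psD_coeff, coeff_X, coeff_one]
  by_cases hd : d = 0
  · subst hd; simp
  · have : d + Finsupp.single i 1 ≠ Finsupp.single i 1 := by
      intro h
      exact hd (add_eq_right.mp h)
    simp [this, hd]

lemma psD_X_ne (i j : Fin 3) (h : i ≠ j) : psD i (X j : PS) = 0 := by
  ext d
  rw [psD_coeff, coeff_X]
  have : d + Finsupp.single i 1 ≠ Finsupp.single j 1 := by
    intro he
    have := congrArg (fun u => u i) he
    simp [Finsupp.single_apply, h, (by simpa using h.symm : j ≠ i)] at this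
  simp [this]

lemma psD_pow (i : Fin 3) (f : PS) (n : ℕ) :
    psD i (f ^ (n + 1)) = ((n + 1 : ℕ) : ℝ) • (f ^ n * psD i f) := by
  induction n with
  | zero => simp [psD]
  | succ n ih =>
    rw [pow_succ, psD_mul, ih, smul_mul_assoc, mul_right_comm, ← pow_succ]
    rw [show ((n + 1 + 1 : ℕ) : ℝ) = ((n + 1 : ℕ) : ℝ) + 1 by push_cast; ring, add_smul, one_smul]

lemma psD_pow_ne (i j : Fin 3) (h : i ≠ j) (n : ℕ) : psD i ((X j : PS) ^ n) = 0 := by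
  cases n with
  | zero => simpa using psD_one i
  | succ n => rw [psD_pow, psD_X_ne i j h, mul_zero, smul_zero]

lemma psD_sum {β : Type*} (i : Fin 3) (s : Finset β) (F : β → PS) :
    psD i (∑ x ∈ s, F x) = ∑ x ∈ s, psD i (F x) := by
  classical
  induction s using Finset.induction_on with
  | empty => simpa using psD_zero i
  | insert a s h ih => rw [Finset.sum_insert h, Finset.sum_insert h, psD_add, ih]


lemma abstract_cancel (B Bx G : PS) (h0 : psD 0 B = Bx) (h1 : psD 1 B = 0)
    (h2 : psD 2 B = 0) :
    psApply ![(X 1 ^ 2 + X 2 ^ 2) + B,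
        X 2 * G - (1 / 2 : ℝ) • (Bx * X 1),
        -(X 1 * G) - (1 / 2 : ℝ) • (Bx * X 2)]
      ((X 1 ^ 2 + X 2 ^ 2) * ((1 / 2 : ℝ) • (X 1 ^ 2 + X 2 ^ 2) + B)) = 0 := by
  show (∑ i, _) = 0
  have dA0 : psD 0 ((X 1 : PS) ^ 2 + X 2 ^ 2) = 0 := by
    rw [psD_add, psD_pow_ne 0 1 (by decide), psD_pow_ne 0 2 (by decide), add_zero]
  have dA1 : psD 1 ((X 1 : PS) ^ 2 + X 2 ^ 2) = X 1 + X 1 := by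
    rw [psD_add, psD_pow_ne 1 2 (by decide), add_zero, pow_two, psD_mul, psD_X_self,
      mul_one, one_mul]
  have dA2 : psD 2 ((X 1 : PS) ^ 2 + X 2 ^ 2) = X 2 + X 2 := by
    rw [psD_add, psD_pow_ne 2 1 (by decide), zero_add, pow_two, psD_mul, psD_X_self,
      mul_one, one_mul]
  have df0 : psD 0 ((X 1 ^ 2 + X 2 ^ 2) * ((1 / 2 : ℝ) • (X 1 ^ 2 + X 2 ^ 2) + B))
      = (X 1 ^ 2 + X 2 ^ 2) * Bx := by
    rw [psD_mul, dA0, psD_add, psD_smul, dA0, h0, smul_zero, zero_add, zero_mul, zero_add]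
  have df1 : psD 1 ((X 1 ^ 2 + X 2 ^ 2) * ((1 / 2 : ℝ) • (X 1 ^ 2 + X 2 ^ 2) + B))
      = (X 1 + X 1) * ((1 / 2 : ℝ) • (X 1 ^ 2 + X 2 ^ 2) + B)
        + (X 1 ^ 2 + X 2 ^ 2) * ((1 / 2 : ℝ) • (X 1 + X 1)) := by
    rw [psD_mul, dA1, psD_add, psD_smul, dA1, h1, add_zero]
  have df2 : psD 2 ((X 1 ^ 2 + X 2 ^ 2) * ((1 / 2 : ℝ) • (X 1 ^ 2 + X 2 ^ 2) + B))
      = (X 2 + X 2) * ((1 / 2 : ℝ) • (X 1 ^ 2 + X 2 ^ 2) + B)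
        + (X 1 ^ 2 + X 2 ^ 2) * ((1 / 2 : ℝ) • (X 2 + X 2)) := by
    rw [psD_mul, dA2, psD_add, psD_smul, dA2, h2, add_zero]
  rw [Fin.sum_univ_three]
  show ((X 1 ^ 2 + X 2 ^ 2) + B) * _ + (X 2 * G - (1 / 2 : ℝ) • (Bx * X 1)) * _
      + (-(X 1 * G) - (1 / 2 : ℝ) • (Bx * X 2)) * _ = 0
  rw [df0, df1, df2]
  simp only [smul_eq_C_mul]
  have h2c : (2 : PS) * C (σ := Fin 3) (R := ℝ) (1 / 2) = 1 := by
    rw [show (2 : PS) = C (σ := Fin 3) (R := ℝ) 2 from (map_ofNat (C (σ := Fin 3) (R := ℝ)) 2).symm, ← map_mul]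
    norm_num
  set c := C (σ := Fin 3) (R := ℝ) (1 / 2) with hc
  set x := (X 1 : PS)
  set y := (X 2 : PS)
  linear_combination (-(Bx * (x ^ 2 + y ^ 2) * ((x ^ 2 + y ^ 2) * (1 + 2 * c) + B))) * h2c

/-- the truncated infinite-level normal form vector field
`ẋ = (y²+z²) + ε x^{p+1} + Σᵢ μᵢ x^{nᵢ+1} + Σ_{k=p+1}^N α_k x^{k+1}`,
`ẏ = z g(x) − ε((p+1)/2)x^p y − Σᵢ ((nᵢ+1)/2)μᵢ x^{nᵢ} y − Σ_k ((k+1)/2)α_k x^k y`,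
`ż = −y g(x) − ε((p+1)/2)x^p z − Σᵢ ((nᵢ+1)/2)μᵢ x^{nᵢ} z − Σ_k ((k+1)/2)α_k x^k z`
admits the first integral
`f = (y²+z²)((1/2)(y²+z²) + ε x^{p+1} + Σᵢ μᵢ x^{nᵢ+1} + Σ_k α_k x^{k+1})`. -/
theorem parametric_normal_form_first_integral
    (p N : ℕ) (hp : 1 ≤ p) (ε : ℝ) (hε : ε = 1 ∨ ε = -1)
    (r : ℕ) (nIdx : Fin r → ℤ) (hn : ∀ i, -1 ≤ nIdx i ∧ nIdx i ≤ (N : ℤ) - 1)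
    (μ : Fin r → ℝ) (α : ℕ → ℝ)
    (g : PS) (hg : ∀ d : Fin 3 →₀ ℕ, (d 1 ≠ 0 ∨ d 2 ≠ 0) → MvPowerSeries.coeff (R := ℝ) d g = 0)
    (w : Fin 3 → PS)
    (hw : w =
      ![(MvPowerSeries.X 1 ^ 2 + MvPowerSeries.X 2 ^ 2) + ε • MvPowerSeries.X 0 ^ (p + 1) +
          ∑ i, μ i • MvPowerSeries.X 0 ^ (nIdx i + 1).toNat +
          ∑ k ∈ Finset.Icc (p + 1) N, α k • MvPowerSeries.X 0 ^ (k + 1),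
        MvPowerSeries.X 2 * g -
          (ε * ((p : ℝ) + 1) / 2) • (MvPowerSeries.X 0 ^ p * MvPowerSeries.X 1) -
          ∑ i, (((nIdx i : ℝ) + 1) / 2 * μ i) •
            (MvPowerSeries.X 0 ^ (nIdx i).toNat * MvPowerSeries.X 1) -
          ∑ k ∈ Finset.Icc (p + 1) N, (((k : ℝ) + 1) / 2 * α k) •
            (MvPowerSeries.X 0 ^ k * MvPowerSeries.X 1),
        -(MvPowerSeries.X 1 * g) -
          (ε * ((p : ℝ) + 1) / 2) • (MvPowerSeries.X 0 ^ p * MvPowerSeries.X 2) -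
          ∑ i, (((nIdx i : ℝ) + 1) / 2 * μ i) •
            (MvPowerSeries.X 0 ^ (nIdx i).toNat * MvPowerSeries.X 2) -
          ∑ k ∈ Finset.Icc (p + 1) N, (((k : ℝ) + 1) / 2 * α k) •
            (MvPowerSeries.X 0 ^ k * MvPowerSeries.X 2)])
    (f : PS)
    (hf : f = (MvPowerSeries.X 1 ^ 2 + MvPowerSeries.X 2 ^ 2) *
        ((1 / 2 : ℝ) • (MvPowerSeries.X 1 ^ 2 + MvPowerSeries.X 2 ^ 2) +
          ε • MvPowerSeries.X 0 ^ (p + 1) +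
          ∑ i, μ i • MvPowerSeries.X 0 ^ (nIdx i + 1).toNat +
          ∑ k ∈ Finset.Icc (p + 1) N, α k • MvPowerSeries.X 0 ^ (k + 1))) :
    psApply w f = 0 := by
  classical
  set B : PS := ε • X 0 ^ (p + 1) + (∑ i, μ i • X 0 ^ (nIdx i + 1).toNat) +
      ∑ k ∈ Finset.Icc (p + 1) N, α k • X 0 ^ (k + 1) with hB
  set Bx : PS := (ε * ((p : ℝ) + 1)) • X 0 ^ p +
      (∑ i, (((nIdx i : ℝ) + 1) * μ i) • X 0 ^ (nIdx i).toNat) +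
      ∑ k ∈ Finset.Icc (p + 1) N, (((k : ℝ) + 1) * α k) • X 0 ^ k with hBx
  have h0 : psD 0 B = Bx := by
    rw [hB, hBx, psD_add, psD_add, psD_sum, psD_sum]
    congr 1
    congr 1
    · rw [psD_smul, psD_pow, psD_X_self, mul_one, smul_smul]
      rw [show ε * (((p + 1 : ℕ)) : ℝ) = ε * ((p : ℝ) + 1) by push_cast; ring]
    · apply Finset.sum_congr rfl
      intro i _
      by_cases hni : nIdx i = -1
      · rw [hni]
        norm_num
        rw [psD_smul, psD_one, smul_zero]
      · have hge : 0 ≤ nIdx i := by have := (hn i).1; omega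
        have hcast : (((nIdx i).toNat : ℕ) : ℝ) = ((nIdx i : ℤ) : ℝ) := by
          exact_mod_cast congrArg (fun z : ℤ => (z : ℝ)) (Int.toNat_of_nonneg hge)
        rw [show (nIdx i + 1).toNat = (nIdx i).toNat + 1 by omega,
          psD_smul, psD_pow, psD_X_self, mul_one, smul_smul]
        rw [show μ i * ((((nIdx i).toNat + 1 : ℕ)) : ℝ) = ((nIdx i : ℝ) + 1) * μ i by
          push_cast; rw [hcast]; ring]
    · apply Finset.sum_congr rfl
      intro k _
      rw [psD_smul, psD_pow, psD_X_self, mul_one, smul_smul]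
      rw [show α k * (((k + 1 : ℕ)) : ℝ) = ((k : ℝ) + 1) * α k by push_cast; ring]
  have h1 : psD 1 B = 0 := by
    rw [hB, psD_add, psD_add, psD_sum, psD_sum]
    simp [psD_smul, psD_pow_ne 1 0 (by decide)]
  have h2 : psD 2 B = 0 := by
    rw [hB, psD_add, psD_add, psD_sum, psD_sum]
    simp [psD_smul, psD_pow_ne 2 0 (by decide)]
  have hexp : ∀ u : PS, (1 / 2 : ℝ) • (Bx * u) =
      (ε * ((p : ℝ) + 1) / 2) • (MvPowerSeries.X 0 ^ p * u) +
      (∑ i, (((nIdx i : ℝ) + 1) / 2 * μ i) • (MvPowerSeries.X 0 ^ (nIdx i).toNat * u)) +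
      ∑ k ∈ Finset.Icc (p + 1) N, (((k : ℝ) + 1) / 2 * α k) • (MvPowerSeries.X 0 ^ k * u) := by
    intro u
    rw [hBx, add_mul, add_mul, smul_add, smul_add]
    congr 1
    congr 1
    · rw [smul_mul_assoc, smul_smul,
        show (1 / 2 : ℝ) * (ε * ((p : ℝ) + 1)) = ε * ((p : ℝ) + 1) / 2 by ring]
    · rw [Finset.sum_mul, Finset.smul_sum]
      apply Finset.sum_congr rfl
      intro i _
      rw [smul_mul_assoc, smul_smul,
        show (1 / 2 : ℝ) * ((((nIdx i : ℝ)) + 1) * μ i) = ((nIdx i : ℝ) + 1) / 2 * μ i by ring]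
    · rw [Finset.sum_mul, Finset.smul_sum]
      apply Finset.sum_congr rfl
      intro k _
      rw [smul_mul_assoc, smul_smul,
        show (1 / 2 : ℝ) * ((((k : ℝ)) + 1) * α k) = ((k : ℝ) + 1) / 2 * α k by ring]
  have c0 : (MvPowerSeries.X 1 ^ 2 + MvPowerSeries.X 2 ^ 2) + ε • MvPowerSeries.X 0 ^ (p + 1) +
      (∑ i, μ i • MvPowerSeries.X 0 ^ (nIdx i + 1).toNat) +
      (∑ k ∈ Finset.Icc (p + 1) N, α k • MvPowerSeries.X 0 ^ (k + 1))
      = (MvPowerSeries.X 1 ^ 2 + MvPowerSeries.X 2 ^ 2) + B := by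
    rw [hB]; abel
  have c1 : MvPowerSeries.X 2 * g -
      (ε * ((p : ℝ) + 1) / 2) • (MvPowerSeries.X 0 ^ p * MvPowerSeries.X 1) -
      (∑ i, (((nIdx i : ℝ) + 1) / 2 * μ i) •
        (MvPowerSeries.X 0 ^ (nIdx i).toNat * MvPowerSeries.X 1)) -
      (∑ k ∈ Finset.Icc (p + 1) N, (((k : ℝ) + 1) / 2 * α k) •
        (MvPowerSeries.X 0 ^ k * MvPowerSeries.X 1))
      = MvPowerSeries.X 2 * g - (1 / 2 : ℝ) • (Bx * MvPowerSeries.X 1) := by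
    rw [hexp (MvPowerSeries.X 1)]; abel
  have c2 : -(MvPowerSeries.X 1 * g) -
      (ε * ((p : ℝ) + 1) / 2) • (MvPowerSeries.X 0 ^ p * MvPowerSeries.X 2) -
      (∑ i, (((nIdx i : ℝ) + 1) / 2 * μ i) •
        (MvPowerSeries.X 0 ^ (nIdx i).toNat * MvPowerSeries.X 2)) -
      (∑ k ∈ Finset.Icc (p + 1) N, (((k : ℝ) + 1) / 2 * α k) •
        (MvPowerSeries.X 0 ^ k * MvPowerSeries.X 2))
      = -(MvPowerSeries.X 1 * g) - (1 / 2 : ℝ) • (Bx * MvPowerSeries.X 2) := by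
    rw [hexp (MvPowerSeries.X 2)]; abel
  have cf : (MvPowerSeries.X 1 ^ 2 + MvPowerSeries.X 2 ^ 2) *
      ((1 / 2 : ℝ) • (MvPowerSeries.X 1 ^ 2 + MvPowerSeries.X 2 ^ 2) +
        ε • MvPowerSeries.X 0 ^ (p + 1) +
        (∑ i, μ i • MvPowerSeries.X 0 ^ (nIdx i + 1).toNat) +
        (∑ k ∈ Finset.Icc (p + 1) N, α k • MvPowerSeries.X 0 ^ (k + 1)))
      = (MvPowerSeries.X 1 ^ 2 + MvPowerSeries.X 2 ^ 2) *
        ((1 / 2 : ℝ) • (MvPowerSeries.X 1 ^ 2 + MvPowerSeries.X 2 ^ 2) + B) := by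
    rw [hB]
    congr 1
    abel
  rw [hw, hf, c0, c1, c2, cf]
  exact abstract_cancel B Bx g h0 h1 h2
end
end
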